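/- Under the stated smoothness, strong convexity, minimizer and heterogeneity-bound hypotheses, for every θ ∈ E and every real α with 0 < α ≤ 1/L, it holds that ‖θ − θ* − α·∑_{k∈Π} w_k ∇F_k(θ)‖² ≤ (1 − μα)·‖θ − θ*‖² + α·Ω. -/
import Mathlib
set_option maxHeartbeats 800000


open Finset RealInnerProductSpace

theorem one_step_descent_bound
    (d : ℕ) (hd : 0 < d)
    (ι : Type*) [Fintype ι]
    (w : ι → ℝ) (hw : ∀ k, 0 ≤ w k) (hw1 : ∑ k, w k = 1)
    (F : ι → EuclideanSpace ℝ (Fin d) → ℝ)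
    (gradF : ι → EuclideanSpace ℝ (Fin d) → EuclideanSpace ℝ (Fin d))
    (hdiff : ∀ k x, HasGradientAt (F k) (gradF k x) x)
    (L μ : ℝ) (hμ : 0 < μ) (hLμ : μ ≤ L)
    (hsmooth : ∀ k, ∀ x y : EuclideanSpace ℝ (Fin d),
      F k x - F k y ≤ ⟪gradF k y, x - y⟫ + (L / 2) * ‖x - y‖ ^ 2)
    (hstrong : ∀ k, ∀ x y : EuclideanSpace ℝ (Fin d),
      F k x - F k y ≥ ⟪gradF k y, x - y⟫ + (μ / 2) * ‖x - y‖ ^ 2)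
    (θmin : ι → EuclideanSpace ℝ (Fin d)) (Fkstar : ι → ℝ)
    (hmin : ∀ k, F k (θmin k) = Fkstar k)
    (hminle : ∀ k, ∀ x, Fkstar k ≤ F k x)
    (θstar : EuclideanSpace ℝ (Fin d)) (Fstar : ℝ)
    (φ1 φ2 : ℝ) (hφ1 : 0 ≤ φ1) (hφ2 : 0 ≤ φ2)
    (hhet1 : |Fstar - ∑ k, w k * Fkstar k| ≤ φ1)
    (hhet2 : |Fstar - ∑ k, w k * F k θstar| ≤ φ2)
    (Ω : ℝ) (hΩ : Ω = 2 * (φ1 + φ2)) :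
    ∀ (θ : EuclideanSpace ℝ (Fin d)) (α : ℝ), 0 < α → α ≤ 1 / L →
      ‖θ - θstar - α • ∑ k, w k • gradF k θ‖ ^ 2
        ≤ (1 - μ * α) * ‖θ - θstar‖ ^ 2 + α * Ω := by
  intro θ α hα hαL
  have hL : 0 < L := lt_of_lt_of_le hμ hLμ
  have hLα : L * α ≤ 1 := by
    rw [le_div_iff₀ hL] at hαL; linarith
  set v : ι → EuclideanSpace ℝ (Fin d) := fun k => gradF k θ with hv
  set g : EuclideanSpace ℝ (Fin d) := ∑ k, w k • v k with hg
  set A := ‖θ - θstar‖ ^ 2 with hA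
  set S := ∑ k, w k * F k θ with hS
  set T := ∑ k, w k * F k θstar with hT
  set U := ∑ k, w k * Fkstar k with hU
  -- expansion
  have hexp : ‖θ - θstar - α • g‖ ^ 2
      = A - 2 * α * ⟪θ - θstar, g⟫ + α ^ 2 * ‖g‖ ^ 2 := by
    rw [@norm_sub_sq_real, real_inner_smul_right, norm_smul, mul_pow, Real.norm_eq_abs,
      sq_abs]
    ring
  -- per-k gradient norm bound
  have hgrad : ∀ k, α / 2 * ‖v k‖ ^ 2 ≤ F k θ - Fkstar k := by
    intro k
    have h1 := hsmooth k (θ - α • v k) θ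
    have h2 := hminle k (θ - α • v k)
    rw [sub_sub_cancel_left, inner_neg_right, real_inner_smul_right,
      real_inner_self_eq_norm_sq, norm_neg, norm_smul, mul_pow, Real.norm_eq_abs,
      sq_abs] at h1
    nlinarith [sq_nonneg (‖v k‖), mul_nonneg hα.le (sq_nonneg ‖v k‖),
      mul_nonneg (mul_nonneg hα.le hα.le) (sq_nonneg ‖v k‖)]
  -- per-k strong convexity bound
  have hsc : ∀ k, F k θ - F k θstar + μ / 2 * A ≤ ⟪θ - θstar, v k⟫ := by
    intro k
    have h1 := hstrong k θstar θ
    have h2 : ⟪v k, θstar - θ⟫ = -⟪θ - θstar, v k⟫ := by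
      rw [real_inner_comm, ← inner_neg_left, neg_sub]
    rw [h2, norm_sub_rev] at h1
    simp only [hA]
    linarith [h1]
  -- inner product bound
  have hinner : μ / 2 * A + S - T ≤ ⟪θ - θstar, g⟫ := by
    have : ⟪θ - θstar, g⟫ = ∑ k, w k * ⟪θ - θstar, v k⟫ := by
      rw [hg, inner_sum]
      exact Finset.sum_congr rfl fun k _ => real_inner_smul_right _ _ _
    rw [this]
    have hges : ∑ k, w k * (F k θ - F k θstar + μ / 2 * A)
        ≤ ∑ k, w k * ⟪θ - θstar, v k⟫ :=
      Finset.sum_le_sum fun k _ => mul_le_mul_of_nonneg_left (hsc k) (hw k)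
    have hrw : ∑ k, w k * (F k θ - F k θstar + μ / 2 * A)
        = S - T + μ / 2 * A := by
      simp only [mul_add, mul_sub, Finset.sum_add_distrib, Finset.sum_sub_distrib,
        ← Finset.sum_mul, hw1]
      ring
    linarith [hges, hrw ▸ hges]
  -- Jensen: norm of g squared
  have hg2 : ‖g‖ ^ 2 ≤ ∑ k, w k * ‖v k‖ ^ 2 := by
    have h1 : ‖g‖ ^ 2 = ∑ k, w k * ⟪g, v k⟫ := by
      rw [← real_inner_self_eq_norm_sq]
      conv_lhs => rw [hg, inner_sum]
      exact Finset.sum_congr rfl fun k _ => real_inner_smul_right _ _ _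
    have h2 : ∑ k, w k * ⟪g, v k⟫ ≤ ∑ k, w k * ((‖g‖ ^ 2 + ‖v k‖ ^ 2) / 2) := by
      refine Finset.sum_le_sum fun k _ => mul_le_mul_of_nonneg_left ?_ (hw k)
      nlinarith [real_inner_le_norm g (v k), sq_nonneg (‖g‖ - ‖v k‖), norm_nonneg g,
        norm_nonneg (v k)]
    have h3 : ∑ k, w k * ((‖g‖ ^ 2 + ‖v k‖ ^ 2) / 2)
        = ‖g‖ ^ 2 / 2 + (∑ k, w k * ‖v k‖ ^ 2) / 2 := by
      have he : ∀ k, w k * ((‖g‖ ^ 2 + ‖v k‖ ^ 2) / 2)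
          = w k * (‖g‖ ^ 2 / 2) + w k * ‖v k‖ ^ 2 / 2 := fun k => by ring
      simp_rw [he, Finset.sum_add_distrib, ← Finset.sum_mul, ← Finset.sum_div, hw1]
      ring
    linarith [h1.le, h2, h3.le]
  -- sum gradient bound
  have hsum : α * (∑ k, w k * ‖v k‖ ^ 2) ≤ 2 * (S - U) := by
    have h1 : ∑ k, w k * (α / 2 * ‖v k‖ ^ 2) ≤ ∑ k, w k * (F k θ - Fkstar k) :=
      Finset.sum_le_sum fun k _ => mul_le_mul_of_nonneg_left (hgrad k) (hw k)
    have h2 : ∑ k, w k * (α / 2 * ‖v k‖ ^ 2) = α / 2 * ∑ k, w k * ‖v k‖ ^ 2 := by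
      rw [Finset.mul_sum]; exact Finset.sum_congr rfl fun k _ => by ring
    have h3 : ∑ k, w k * (F k θ - Fkstar k) = S - U := by
      simp only [mul_sub, Finset.sum_sub_distrib, hS, hU]
    rw [h2, h3] at h1
    linarith
  -- heterogeneity
  have hhet : T - U ≤ φ1 + φ2 := by
    have h1 := abs_le.mp hhet1
    have h2 := abs_le.mp hhet2
    simp only [hT, hU]
    linarith [h1.1, h2.2]
  -- combine
  rw [hexp]
  have hq1 : α ^ 2 * ‖g‖ ^ 2 ≤ α * (2 * (S - U)) := by
    have := mul_le_mul_of_nonneg_left hg2 (sq_nonneg α)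
    have h2 := mul_le_mul_of_nonneg_left hsum hα.le
    calc α ^ 2 * ‖g‖ ^ 2 ≤ α ^ 2 * ∑ k, w k * ‖v k‖ ^ 2 := this
      _ = α * (α * ∑ k, w k * ‖v k‖ ^ 2) := by ring
      _ ≤ α * (2 * (S - U)) := h2
  have hq2 : α * (μ / 2 * A + S - T) ≤ α * ⟪θ - θstar, g⟫ :=
    mul_le_mul_of_nonneg_left hinner hα.le
  have hq3 : α * (T - U) ≤ α * (φ1 + φ2) := mul_le_mul_of_nonneg_left hhet hα.le
  rw [hΩ]
  linarith [hq1, hq2, hq3]
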